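/- Let G be a multi r-edge-colored complete graph on n vertices with r ≥ 2 (colors {1,...,r}, transitive coloring, every edge has at least one color). Then there exist r − 1 monochromatic components of pairwise different colors, all containing a common vertex, whose union has size at least (1 − (r−2)/(r−1)²)·n. -/
import Mathlib

open Finset

namespace Stmt6Aux

variable {V : Type*} [Fintype V] [DecidableEq V] {r : ℕ}

/-- The monochromatic class (component) of color `i` through `v`. -/
def Cl (col : V → V → Finset (Fin r)) (i : Fin r) (v : V) : Finset V :=
  Finset.univ.filter (fun u => u = v ∨ i ∈ col u v)

/-- The exclusive `i`-neighbors of `v`: vertices joined to `v` by color set exactly `{i}`. -/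
def Ex (col : V → V → Finset (Fin r)) (i : Fin r) (v : V) : Finset V :=
  Finset.univ.filter (fun u => u ≠ v ∧ col u v = {i})

/-- Vertices of the class of `v` that are neither `x` nor exclusive partners of `x`. -/
def Bad (col : V → V → Finset (Fin r)) (c : Fin r) (v x : V) : Finset V :=
  (Cl col c v).filter (fun w => w ≠ x ∧ col w x ≠ ({c} : Finset (Fin r)))

/-- Common exclusive neighborhood of a finite set `T` inside the class of `v`. -/
def Wset (col : V → V → Finset (Fin r)) (c : Fin r) (v : V) (T : Finset V) : Finset V :=
  (Cl col c v).filter (fun w => ∀ x ∈ T, w ≠ x ∧ col w x = ({c} : Finset (Fin r)))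

variable {col : V → V → Finset (Fin r)}

lemma mem_Cl {i : Fin r} {v u : V} : u ∈ Cl col i v ↔ (u = v ∨ i ∈ col u v) := by
  simp [Cl]

lemma self_mem_Cl {i : Fin r} {v : V} : v ∈ Cl col i v := mem_Cl.2 (Or.inl rfl)

lemma mem_Ex {i : Fin r} {v u : V} : u ∈ Ex col i v ↔ (u ≠ v ∧ col u v = {i}) := by
  simp [Ex]

lemma Ex_disjoint {i j : Fin r} (hij : i ≠ j) (v : V) :
    Disjoint (Ex col i v) (Ex col j v) := by
  rw [Finset.disjoint_left]
  intro u hu hu'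
  have h1 := (mem_Ex.1 hu).2
  have h2 := (mem_Ex.1 hu').2
  rw [h1] at h2
  exact hij (Finset.singleton_inj.1 h2)

lemma Ex_disjoint_Cl {i c : Fin r} (hic : i ≠ c) (v : V) :
    Disjoint (Ex col i v) (Cl col c v) := by
  rw [Finset.disjoint_left]
  intro u hu hu'
  obtain ⟨huv, hcol⟩ := mem_Ex.1 hu
  rcases mem_Cl.1 hu' with h | h
  · exact huv h
  · rw [hcol, Finset.mem_singleton] at h
    exact hic h.symm

section withHyps

variable (hsymm : ∀ u v : V, col u v = col v u)
variable (htrans : ∀ u v w : V, ∀ i : Fin r,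
      i ∈ col u v → i ∈ col v w → u ≠ w → i ∈ col u w)

include hsymm htrans

lemma Cl_transport {c : Fin r} {v x : V} (hx : x ∈ Cl col c v) :
    Cl col c x = Cl col c v := by
  rcases mem_Cl.1 hx with h | hcv
  · subst h; rfl
  · ext u
    simp only [mem_Cl]
    constructor
    · rintro (rfl | hux)
      · exact mem_Cl.1 hx
      · by_cases huv : u = v
        · exact Or.inl huv
        · exact Or.inr (htrans u x v c hux hcv huv)
    · rintro (rfl | huv)
      · refine Or.inr ?_
        rw [hsymm]
        exact hcv
      · by_cases hux : u = x
        · exact Or.inl hux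
        · refine Or.inr ?_
          have hvx : c ∈ col v x := by rw [hsymm]; exact hcv
          exact htrans u v x c huv hvx hux

lemma mem_col_of_same_class {c : Fin r} {v u x : V} (hu : u ∈ Cl col c v)
    (hx : x ∈ Cl col c v) (hux : u ≠ x) : c ∈ col u x := by
  have h := Cl_transport hsymm htrans hx
  rw [← h] at hu
  rcases mem_Cl.1 hu with h' | h'
  · exact absurd h' hux
  · exact h'

lemma Cl_disjoint {i : Fin r} {x y : V} (hxy : x ≠ y) (hi : i ∉ col x y) :
    Disjoint (Cl col i x) (Cl col i y) := by
  rw [Finset.disjoint_left]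
  intro z hzx hzy
  rcases mem_Cl.1 hzx with rfl | hzx'
  · rcases mem_Cl.1 hzy with h | h
    · exact hxy h
    · exact hi h
  · rcases mem_Cl.1 hzy with rfl | hzy'
    · refine hi ?_
      rw [hsymm]
      exact hzx'
    · refine hi ?_
      have hxz : i ∈ col x z := by rw [hsymm]; exact hzx'
      exact htrans x z y i hxz hzy' hxy


lemma decomp (v x : V) (c : Fin r) (hx : x ∈ Cl col c v) :
    (Cl col c v).card = 1 + (Ex col c x).card + (Bad col c v x).card := by
  classical
  have hEq : Cl col c v = insert x (Ex col c x ∪ Bad col c v x) := by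
    ext u
    simp only [Finset.mem_insert, Finset.mem_union, mem_Ex, Bad, Finset.mem_filter]
    constructor
    · intro hu
      by_cases hux : u = x
      · exact Or.inl hux
      · have hc : c ∈ col u x := mem_col_of_same_class hsymm htrans hu hx hux
        by_cases hcx : col u x = ({c} : Finset (Fin r))
        · exact Or.inr (Or.inl ⟨hux, hcx⟩)
        · exact Or.inr (Or.inr ⟨hu, hux, hcx⟩)
    · rintro (rfl | ⟨hux, hcx⟩ | ⟨hu, _, _⟩)
      · exact hx
      · have h1 : u ∈ Cl col c x :=
          mem_Cl.2 (Or.inr (by rw [hcx]; exact Finset.mem_singleton_self c))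
        rwa [Cl_transport hsymm htrans hx] at h1
      · exact hu
  have h1 : x ∉ Ex col c x ∪ Bad col c v x := by
    simp [mem_Ex, Bad, Finset.mem_filter]
  have h2 : Disjoint (Ex col c x) (Bad col c v x) := by
    rw [Finset.disjoint_left]
    intro w hwE hwB
    exact ((Finset.mem_filter.1 hwB).2.2) (mem_Ex.1 hwE).2
  rw [hEq, Finset.card_insert_of_notMem h1, Finset.card_union_of_disjoint h2]
  omega

end withHyps

lemma count_a (v : V) (c : Fin r) :
    (Cl col c v).card + ∑ i ∈ univ.erase c, (Ex col i v).card ≤ Fintype.card V := by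
  classical
  have hdisj2 : ∀ i ∈ univ.erase c, ∀ j ∈ univ.erase c, i ≠ j →
      Disjoint (Ex col i v) (Ex col j v) := fun i _ j _ hij => Ex_disjoint hij v
  have h1 : ∑ i ∈ univ.erase c, (Ex col i v).card
      = ((univ.erase c).biUnion (fun i => Ex col i v)).card :=
    (Finset.card_biUnion hdisj2).symm
  have h2 : Disjoint (Cl col c v) ((univ.erase c).biUnion fun i => Ex col i v) := by
    rw [Finset.disjoint_biUnion_right]
    intro i hi
    exact (Ex_disjoint_Cl (Finset.mem_erase.1 hi).1 v).symm
  calc (Cl col c v).card + ∑ i ∈ univ.erase c, (Ex col i v).card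
      = (Cl col c v ∪ (univ.erase c).biUnion fun i => Ex col i v).card := by
        rw [Finset.card_union_of_disjoint h2, h1]
    _ ≤ (Finset.univ : Finset V).card := Finset.card_le_card (Finset.subset_univ _)
    _ = Fintype.card V := Finset.card_univ

lemma count_L7 (hne : ∀ u v : V, u ≠ v → (col u v).Nonempty) (x : V) (c : Fin r) :
    Fintype.card V + (r - 1) ≤
      (∑ i ∈ univ.erase c, (Cl col i x).card) + (Cl col c x).card := by
  classical
  have hcard : ∀ t : Finset V, t.card = ∑ u ∈ univ, (if u ∈ t then 1 else 0) := by
    intro t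
    rw [Finset.sum_ite_mem, Finset.univ_inter, Finset.card_eq_sum_ones]
  have hL : (∑ i ∈ univ.erase c, (Cl col i x).card) + (Cl col c x).card
      = ∑ u ∈ univ, ((∑ i ∈ univ.erase c, if u ∈ Cl col i x then 1 else 0)
          + (if u ∈ Cl col c x then 1 else 0)) := by
    rw [Finset.sum_add_distrib]
    congr 1
    · rw [Finset.sum_comm]
      exact Finset.sum_congr rfl fun i _ => hcard _
    · exact hcard _
  have hpt : ∀ u ∈ (univ : Finset V), (if u = x then r else 1) ≤
      (∑ i ∈ univ.erase c, if u ∈ Cl col i x then 1 else 0)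
        + (if u ∈ Cl col c x then 1 else 0) := by
    intro u _
    by_cases hux : u = x
    · subst hux
      have h1 : (∑ i ∈ univ.erase c, if u ∈ Cl col i u then 1 else 0) = r - 1 := by
        rw [Finset.sum_congr rfl (fun i _ => if_pos self_mem_Cl), Finset.sum_const,
          smul_eq_mul, mul_one, Finset.card_erase_of_mem (Finset.mem_univ _),
          Finset.card_univ, Fintype.card_fin]
      rw [if_pos rfl, h1, if_pos self_mem_Cl]
      have : 1 ≤ r := Fin.pos c
      omega
    · rw [if_neg hux]
      by_cases hc : u ∈ Cl col c x
      · rw [if_pos hc]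
        exact Nat.le_add_left 1 _
      · rw [if_neg hc]
        obtain ⟨j, hj⟩ := hne u x hux
        have hjc : j ≠ c := by
          intro h; subst h; exact hc (mem_Cl.2 (Or.inr hj))
        have hjmem : j ∈ univ.erase c := Finset.mem_erase.2 ⟨hjc, Finset.mem_univ _⟩
        have hone : (if u ∈ Cl col j x then 1 else 0) = 1 := if_pos (mem_Cl.2 (Or.inr hj))
        calc 1 = (if u ∈ Cl col j x then 1 else 0) := hone.symm
          _ ≤ ∑ i ∈ univ.erase c, (if u ∈ Cl col i x then 1 else 0) :=
              Finset.single_le_sum (f := fun i => if u ∈ Cl col i x then 1 else 0)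
                (fun i _ => Nat.zero_le _) hjmem
          _ ≤ _ := Nat.le_add_right _ _
  have hr1 : 1 ≤ r := Fin.pos c
  have hLHS : ∑ u ∈ (univ : Finset V), (if u = x then r else 1)
      = Fintype.card V + (r - 1) := by
    have he : ∀ u : V, (if u = x then r else 1) = 1 + (if u = x then r - 1 else 0) := by
      intro u
      by_cases h : u = x <;> simp [h] <;> omega
    rw [Finset.sum_congr rfl fun u _ => he u, Finset.sum_add_distrib]
    rw [Finset.sum_ite_eq' univ x (fun _ => r - 1), if_pos (Finset.mem_univ x)]
    simp [Finset.card_univ]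
  calc Fintype.card V + (r - 1)
      = ∑ u ∈ (univ : Finset V), (if u = x then r else 1) := hLHS.symm
    _ ≤ ∑ u ∈ univ, ((∑ i ∈ univ.erase c, if u ∈ Cl col i x then 1 else 0)
          + (if u ∈ Cl col c x then 1 else 0)) := Finset.sum_le_sum hpt
    _ = _ := hL.symm

lemma cover_b (v : V) (c : Fin r) (T : Finset V) :
    (Cl col c v).card ≤ (Wset col c v T).card + ∑ x ∈ T, (1 + (Bad col c v x).card) := by
  classical
  have hsub : Cl col c v ⊆ (Wset col c v T) ∪ T.biUnion (fun x => insert x (Bad col c v x)) := by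
    intro u hu
    by_cases h : ∀ x ∈ T, u ≠ x ∧ col u x = ({c} : Finset (Fin r))
    · exact Finset.mem_union_left _ (Finset.mem_filter.2 ⟨hu, h⟩)
    · push_neg at h
      obtain ⟨x, hxT, hx⟩ := h
      refine Finset.mem_union_right _ (Finset.mem_biUnion.2 ⟨x, hxT, ?_⟩)
      by_cases hux : u = x
      · exact hux ▸ Finset.mem_insert_self _ _
      · exact Finset.mem_insert_of_mem (Finset.mem_filter.2 ⟨hu, hux, hx hux⟩)
  calc (Cl col c v).card
      ≤ ((Wset col c v T) ∪ T.biUnion fun x => insert x (Bad col c v x)).card :=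
        Finset.card_le_card hsub
    _ ≤ (Wset col c v T).card + (T.biUnion fun x => insert x (Bad col c v x)).card :=
        Finset.card_union_le _ _
    _ ≤ (Wset col c v T).card + ∑ x ∈ T, (insert x (Bad col c v x)).card := by
        gcongr
        exact Finset.card_biUnion_le
    _ ≤ _ := by
        gcongr with x hx
        exact (Finset.card_insert_le _ _).trans (by omega)

lemma contra [Nonempty V] (hr : 2 ≤ r)
    (hsymm : ∀ u v : V, col u v = col v u)
    (hne : ∀ u v : V, u ≠ v → (col u v).Nonempty)
    (htrans : ∀ u v w : V, ∀ i : Fin r,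
      i ∈ col u v → i ∈ col v w → u ≠ w → i ∈ col u w)
    (Hfail : ∀ (v : V) (i : Fin r),
      ((r : ℝ) - 2) / ((r : ℝ) - 1) ^ 2 * (Fintype.card V : ℝ) < ((Ex col i v).card : ℝ)) :
    False := by
  classical
  set n : ℕ := Fintype.card V with hn
  have hρ2 : (2 : ℝ) ≤ (r : ℝ) := by exact_mod_cast hr
  have hρ1 : (0 : ℝ) < (r : ℝ) - 1 := by linarith
  set B : ℝ := ((r : ℝ) - 2) / ((r : ℝ) - 1) ^ 2 * (n : ℝ) with hBdef
  have hB0 : 0 ≤ B := by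
    apply mul_nonneg
    · apply div_nonneg (by linarith) (by positivity)
    · positivity
  have hercard : ∀ c : Fin r, (((univ.erase c) : Finset (Fin r)).card : ℝ) = (r : ℝ) - 1 := by
    intro c
    rw [Finset.card_erase_of_mem (Finset.mem_univ _), Finset.card_univ, Fintype.card_fin]
    rw [Nat.cast_sub (by omega : 1 ≤ r), Nat.cast_one]
  -- (a) all classes are (strictly-ish) smaller than n/(r-1)
  have ha : ∀ (v : V) (c : Fin r), ((Cl col c v).card : ℝ) ≤ (n : ℝ) - ((r : ℝ) - 1) * B := by
    intro v c
    have h1 : (Cl col c v).card + ∑ i ∈ univ.erase c, (Ex col i v).card ≤ n := count_a v c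
    have h3 : (univ.erase c).card • B ≤ ∑ i ∈ univ.erase c, ((Ex col i v).card : ℝ) :=
      Finset.card_nsmul_le_sum _ _ _ (fun i _ => le_of_lt (Hfail v i))
    rw [nsmul_eq_mul, hercard] at h3
    have h4 : ((Cl col c v).card : ℝ) + ∑ i ∈ univ.erase c, ((Ex col i v).card : ℝ) ≤ (n : ℝ) := by
      exact_mod_cast h1
    linarith
  have hId : ((r : ℝ) - 2) * ((n : ℝ) - ((r : ℝ) - 1) * B) = ((r : ℝ) - 1) * B := by
    rw [hBdef]
    field_simp
    ring
  -- (b) every class contains an exclusive r-clique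
  have hb : ∀ (v : V) (c : Fin r), ∃ T : Finset V, T ⊆ Cl col c v ∧ T.card = r ∧
      (∀ x ∈ T, ∀ y ∈ T, x ≠ y → col x y = ({c} : Finset (Fin r))) := by
    intro v c
    suffices H : ∀ k, k ≤ r → ∃ T : Finset V, T ⊆ Cl col c v ∧ T.card = k ∧
        (∀ x ∈ T, ∀ y ∈ T, x ≠ y → col x y = ({c} : Finset (Fin r))) from H r le_rfl
    intro k
    induction k with
    | zero =>
      intro _
      exact ⟨∅, by simp⟩
    | succ k ih =>
      intro hk
      obtain ⟨T, hTS, hTcard, hTcl⟩ := ih (by omega)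
      have hWne : (Wset col c v T).Nonempty := by
        rcases Nat.eq_zero_or_pos k with hk0 | hkpos
        · subst hk0
          have hT : T = ∅ := Finset.card_eq_zero.1 hTcard
          refine ⟨v, Finset.mem_filter.2 ⟨self_mem_Cl, ?_⟩⟩
          rw [hT]
          intro x hx
          exact absurd hx (Finset.notMem_empty x)
        · have hTne : T.Nonempty := Finset.card_pos.1 (by omega)
          by_contra hWe
          rw [Finset.not_nonempty_iff_eq_empty] at hWe
          have hc1 : ((Cl col c v).card : ℝ)
              ≤ ((Wset col c v T).card : ℝ) + ∑ x ∈ T, (1 + ((Bad col c v x).card : ℝ)) := by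
            have h := cover_b (col := col) v c T
            have h' : ((Cl col c v).card : ℝ)
                ≤ (((Wset col c v T).card + ∑ x ∈ T, (1 + (Bad col c v x).card) : ℕ) : ℝ) := by
              exact_mod_cast h
            push_cast at h'
            exact h'
          have hWz : ((Wset col c v T).card : ℝ) = 0 := by rw [hWe]; simp
          have hd : ∀ x ∈ T, (1 : ℝ) + ((Bad col c v x).card : ℝ)
              < ((Cl col c v).card : ℝ) - B := by
            intro x hxT
            have hxS : x ∈ Cl col c v := hTS hxT
            have hdec := decomp hsymm htrans v x c hxS
            have hdecR : ((Cl col c v).card : ℝ)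
                = 1 + ((Ex col c x).card : ℝ) + ((Bad col c v x).card : ℝ) := by
              exact_mod_cast hdec
            have hEx := Hfail x c
            linarith
          have hsum : ∑ x ∈ T, ((1 : ℝ) + ((Bad col c v x).card : ℝ))
              < ∑ _x ∈ T, (((Cl col c v).card : ℝ) - B) :=
            Finset.sum_lt_sum_of_nonempty hTne hd
          have hsc : ∑ _x ∈ T, (((Cl col c v).card : ℝ) - B)
              = (k : ℝ) * (((Cl col c v).card : ℝ) - B) := by
            rw [Finset.sum_const, hTcard, nsmul_eq_mul]
          have hSB : 0 ≤ ((Cl col c v).card : ℝ) - B := by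
            obtain ⟨x₀, hx₀⟩ := hTne
            have hxS : x₀ ∈ Cl col c v := hTS hx₀
            have hdec := decomp hsymm htrans v x₀ c hxS
            have hle : ((Ex col c x₀).card : ℝ) ≤ ((Cl col c v).card : ℝ) := by
              exact_mod_cast (by omega : (Ex col c x₀).card ≤ (Cl col c v).card)
            have hEx := Hfail x₀ c
            linarith
          have hkρ : (k : ℝ) ≤ (r : ℝ) - 1 := by
            have : (k : ℝ) + 1 ≤ (r : ℝ) := by exact_mod_cast hk
            linarith
          have h5 : (k : ℝ) * (((Cl col c v).card : ℝ) - B)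
              ≤ ((r : ℝ) - 1) * (((Cl col c v).card : ℝ) - B) :=
            mul_le_mul_of_nonneg_right hkρ hSB
          have h6 : ((r : ℝ) - 1) * (((Cl col c v).card : ℝ) - B) ≤ ((Cl col c v).card : ℝ) := by
            have h7 : ((r : ℝ) - 2) * ((Cl col c v).card : ℝ)
                ≤ ((r : ℝ) - 2) * ((n : ℝ) - ((r : ℝ) - 1) * B) :=
              mul_le_mul_of_nonneg_left (ha v c) (by linarith)
            nlinarith
          linarith
      obtain ⟨w, hw⟩ := hWne
      have hwS : w ∈ Cl col c v := (Finset.mem_filter.1 hw).1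
      have hwP : ∀ x ∈ T, w ≠ x ∧ col w x = ({c} : Finset (Fin r)) := (Finset.mem_filter.1 hw).2
      have hwT : w ∉ T := fun h => (hwP w h).1 rfl
      refine ⟨insert w T, Finset.insert_subset hwS hTS, ?_, ?_⟩
      · rw [Finset.card_insert_of_notMem hwT, hTcard]
      · intro x hx y hy hxy
        rcases Finset.mem_insert.1 hx with rfl | hxT
        · rcases Finset.mem_insert.1 hy with rfl | hyT
          · exact absurd rfl hxy
          · exact (hwP y hyT).2
        · rcases Finset.mem_insert.1 hy with rfl | hyT
          · rw [hsymm]; exact (hwP x hxT).2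
          · exact hTcl x hxT y hyT hxy
  -- clique class disjoint-sum bound
  have hcliquesum : ∀ (T : Finset V) (c i : Fin r), i ≠ c →
      (∀ x ∈ T, ∀ y ∈ T, x ≠ y → col x y = ({c} : Finset (Fin r))) →
      ∑ x ∈ T, (Cl col i x).card ≤ n := by
    intro T c i hic hTcl
    have hdisj : ∀ x ∈ T, ∀ y ∈ T, x ≠ y → Disjoint (Cl col i x) (Cl col i y) := by
      intro x hx y hy hxy
      refine Cl_disjoint hsymm htrans hxy ?_
      rw [hTcl x hx y hy hxy, Finset.mem_singleton]
      exact hic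
    calc ∑ x ∈ T, (Cl col i x).card = (T.biUnion fun x => Cl col i x).card :=
          (Finset.card_biUnion hdisj).symm
      _ ≤ (Finset.univ : Finset V).card := Finset.card_le_card (Finset.subset_univ _)
      _ = n := Finset.card_univ
  -- (c) every class is large
  have hcN : ∀ (v : V) (c : Fin r),
      r * (n + (r - 1)) ≤ (r - 1) * n + r * (Cl col c v).card := by
    intro v c
    obtain ⟨T, hTS, hTcard, hTcl⟩ := hb v c
    have h7 : ∀ x ∈ T, n + (r - 1)
        ≤ (∑ i ∈ univ.erase c, (Cl col i x).card) + (Cl col c v).card := by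
      intro x hx
      have h := count_L7 (col := col) hne x c
      rwa [Cl_transport hsymm htrans (hTS hx)] at h
    have hsum : T.card * (n + (r - 1))
        ≤ ∑ x ∈ T, ((∑ i ∈ univ.erase c, (Cl col i x).card) + (Cl col c v).card) := by
      have := Finset.card_nsmul_le_sum T
        (fun x => (∑ i ∈ univ.erase c, (Cl col i x).card) + (Cl col c v).card)
        (n + (r - 1)) h7
      rwa [smul_eq_mul] at this
    have hswap : ∑ x ∈ T, ((∑ i ∈ univ.erase c, (Cl col i x).card) + (Cl col c v).card)
        = (∑ i ∈ univ.erase c, ∑ x ∈ T, (Cl col i x).card) + T.card * (Cl col c v).card := by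
      rw [Finset.sum_add_distrib, Finset.sum_comm, Finset.sum_const, smul_eq_mul]
    have hbound : (∑ i ∈ univ.erase c, ∑ x ∈ T, (Cl col i x).card)
        ≤ (r - 1) * n := by
      calc (∑ i ∈ univ.erase c, ∑ x ∈ T, (Cl col i x).card)
          ≤ ∑ _i ∈ univ.erase c, n := by
            refine Finset.sum_le_sum ?_
            intro i hi
            exact hcliquesum T c i (Finset.mem_erase.1 hi).1 hTcl
        _ = (r - 1) * n := by
            rw [Finset.sum_const, smul_eq_mul, Finset.card_erase_of_mem (Finset.mem_univ _),
              Finset.card_univ, Fintype.card_fin]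
    rw [hswap, hTcard] at hsum
    omega
  -- (d) final contradiction
  obtain ⟨v₀⟩ := (inferInstance : Nonempty V)
  have h0r : 0 < r := by omega
  have h1r : 1 < r := by omega
  set c₀ : Fin r := ⟨0, h0r⟩ with hc₀
  set i₁ : Fin r := ⟨1, h1r⟩ with hi₁
  have hi₁c₀ : i₁ ≠ c₀ := by
    simp [hc₀, hi₁, Fin.ext_iff]
  obtain ⟨T, hTS, hTcard, hTcl⟩ := hb v₀ c₀
  have hup : ∑ x ∈ T, (Cl col i₁ x).card ≤ n := hcliquesum T c₀ i₁ hi₁c₀ hTcl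
  have hrm1 : ((r - 1 : ℕ) : ℝ) = (r : ℝ) - 1 := by
    rw [Nat.cast_sub (by omega : 1 ≤ r), Nat.cast_one]
  have hlow : ∀ x ∈ T, (n : ℝ) + (r : ℝ) * ((r : ℝ) - 1) ≤ (r : ℝ) * ((Cl col i₁ x).card : ℝ) := by
    intro x _
    have h := hcN x i₁
    have hcast : (r : ℝ) * ((n : ℝ) + ((r : ℝ) - 1))
        ≤ ((r : ℝ) - 1) * (n : ℝ) + (r : ℝ) * ((Cl col i₁ x).card : ℝ) := by
      have h' : ((r * (n + (r - 1)) : ℕ) : ℝ) ≤ (((r - 1) * n + r * (Cl col i₁ x).card : ℕ) : ℝ) := by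
        exact_mod_cast h
      push_cast [hrm1] at h'
      linarith
    nlinarith
  have hsumlow : (T.card : ℝ) * ((n : ℝ) + (r : ℝ) * ((r : ℝ) - 1))
      ≤ ∑ x ∈ T, (r : ℝ) * ((Cl col i₁ x).card : ℝ) := by
    have := Finset.card_nsmul_le_sum T (fun x => (r : ℝ) * ((Cl col i₁ x).card : ℝ))
      ((n : ℝ) + (r : ℝ) * ((r : ℝ) - 1)) hlow
    rwa [nsmul_eq_mul] at this
  have hupR : ∑ x ∈ T, (r : ℝ) * ((Cl col i₁ x).card : ℝ) ≤ (r : ℝ) * (n : ℝ) := by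
    rw [← Finset.mul_sum]
    refine mul_le_mul_of_nonneg_left ?_ (by linarith : (0 : ℝ) ≤ (r : ℝ))
    have : ((∑ x ∈ T, (Cl col i₁ x).card : ℕ) : ℝ) ≤ (n : ℝ) := by exact_mod_cast hup
    push_cast at this
    exact this
  have hTc : (T.card : ℝ) = (r : ℝ) := by rw [hTcard]
  rw [hTc] at hsumlow
  nlinarith
end Stmt6Aux

/-- In a multi r-edge-colored complete graph on n vertices (r ≥ 2),
there are r − 1 monochromatic components of pairwise different colors, all
containing a common vertex v, whose union has at least (1 − (r−2)/(r−1)²)·n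
vertices. -/
theorem stmt_6 {V : Type*} [Fintype V] [DecidableEq V] [Nonempty V] (r : ℕ)
    (hr : 2 ≤ r)
    (col : V → V → Finset (Fin r))
    (hsymm : ∀ u v : V, col u v = col v u)
    (hne : ∀ u v : V, u ≠ v → (col u v).Nonempty)
    (htrans : ∀ u v w : V, ∀ i : Fin r,
      i ∈ col u v → i ∈ col v w → u ≠ w → i ∈ col u w) :
    ∃ (v : V) (I : Finset (Fin r)), I.card = r - 1 ∧
      (1 - ((r : ℝ) - 2) / ((r : ℝ) - 1) ^ 2) * Fintype.card V ≤
        Set.ncard {u : V | u = v ∨ ∃ i ∈ I, i ∈ col u v} := by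
  by_cases Hfail : ∀ (v : V) (i : Fin r),
      ((r : ℝ) - 2) / ((r : ℝ) - 1) ^ 2 * (Fintype.card V : ℝ) < ((Stmt6Aux.Ex col i v).card : ℝ)
  · exact (Stmt6Aux.contra hr hsymm hne htrans Hfail).elim
  · push_neg at Hfail
    obtain ⟨v, i₀, hle⟩ := Hfail
    refine ⟨v, Finset.univ.erase i₀, ?_, ?_⟩
    · rw [Finset.card_erase_of_mem (Finset.mem_univ _), Finset.card_univ, Fintype.card_fin]
    · set G := (Stmt6Aux.Ex col i₀ v)ᶜ with hG
      have hGsub : (↑G : Set V) ⊆ {u : V | u = v ∨ ∃ i ∈ Finset.univ.erase i₀, i ∈ col u v} := by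
        intro u hu
        have hu' : u ∉ Stmt6Aux.Ex col i₀ v := by
          rw [hG] at hu
          exact Finset.mem_compl.1 hu
        by_cases huv : u = v
        · exact Or.inl huv
        · refine Or.inr ?_
          have hcol : col u v ≠ ({i₀} : Finset (Fin r)) := by
            intro h
            exact hu' (Stmt6Aux.mem_Ex.2 ⟨huv, h⟩)
          have hnsub : ¬ col u v ⊆ ({i₀} : Finset (Fin r)) := by
            intro h
            rcases Finset.subset_singleton_iff.1 h with h' | h'
            · exact (hne u v huv).ne_empty h'
            · exact hcol h'
          obtain ⟨j, hj, hji⟩ := Finset.not_subset.1 hnsub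
          rw [Finset.mem_singleton] at hji
          exact ⟨j, Finset.mem_erase.2 ⟨hji, Finset.mem_univ _⟩, hj⟩
      have hGcard : (G.card : ℕ) ≤ Set.ncard {u : V | u = v ∨ ∃ i ∈ Finset.univ.erase i₀, i ∈ col u v} := by
        rw [← Set.ncard_coe_finset G]
        exact Set.ncard_le_ncard hGsub (Set.toFinite _)
      have hGcardR : (G.card : ℝ)
          ≤ (Set.ncard {u : V | u = v ∨ ∃ i ∈ Finset.univ.erase i₀, i ∈ col u v} : ℝ) := by
        exact_mod_cast hGcard
      have hcard : Fintype.card V ≤ G.card + (Stmt6Aux.Ex col i₀ v).card := by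
        rw [hG, Finset.card_compl]
        have := Finset.card_le_card (Finset.subset_univ (Stmt6Aux.Ex col i₀ v))
        rw [Finset.card_univ] at this
        omega
      have hcardR : (Fintype.card V : ℝ)
          ≤ (G.card : ℝ) + ((Stmt6Aux.Ex col i₀ v).card : ℝ) := by exact_mod_cast hcard
      have hring : (1 - ((r : ℝ) - 2) / ((r : ℝ) - 1) ^ 2) * (Fintype.card V : ℝ)
          = (Fintype.card V : ℝ)
            - ((r : ℝ) - 2) / ((r : ℝ) - 1) ^ 2 * (Fintype.card V : ℝ) := by ring
      rw [hring]
      linarith
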